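/- Let d ≥ 2 and let x, y, z ∈ ℝ^{d+2} be nonzero vectors with q(x) = q(y) = q(z) = 0 such that ⟨x, y⟩ < 0, ⟨y, z⟩ < 0 and ⟨x, z⟩ < 0. Then x, y, z are linearly independent and the restriction of q to Span(x, y, z) has signature (2,1); that is, there exist vectors u₁, u₂, u₃ spanning Span(x, y, z) with ⟨uᵢ, uⱼ⟩ = 0 for i ≠ j, q(u₁) = q(u₂) = 1 and q(u₃) = −1. -/

import Mathlib

noncomputable section

/-- The coefficient of the signature-(d,2) quadratic form: +1 on the first `d`
coordinates, −1 on the last two. -/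
def eps (d : ℕ) (i : Fin (d + 2)) : ℝ := if (i : ℕ) < d then 1 else -1

/-- The bilinear form ⟨·,·⟩ of signature (d,2) on ℝ^{d+2}. -/
def bil (d : ℕ) (x y : EuclideanSpace ℝ (Fin (d + 2))) : ℝ := ∑ i, eps d i * x i * y i

/-- The quadratic form q of signature (d,2). -/
def quad (d : ℕ) (x : EuclideanSpace ℝ (Fin (d + 2))) : ℝ := bil d x x

lemma bil_comm (d : ℕ) (x y : EuclideanSpace ℝ (Fin (d + 2))) : bil d x y = bil d y x := by
  unfold bil; apply Finset.sum_congr rfl; intros; ring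

lemma bil_add_right (d : ℕ) (x y z : EuclideanSpace ℝ (Fin (d + 2))) :
    bil d x (y + z) = bil d x y + bil d x z := by
  unfold bil; rw [← Finset.sum_add_distrib]
  apply Finset.sum_congr rfl; intro i _
  simp only [PiLp.add_apply]; ring

lemma bil_sub_right (d : ℕ) (x y z : EuclideanSpace ℝ (Fin (d + 2))) :
    bil d x (y - z) = bil d x y - bil d x z := by
  unfold bil; rw [← Finset.sum_sub_distrib]
  apply Finset.sum_congr rfl; intro i _
  simp only [PiLp.sub_apply]; ring

lemma bil_smul_right (d : ℕ) (c : ℝ) (x y : EuclideanSpace ℝ (Fin (d + 2))) :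
    bil d x (c • y) = c * bil d x y := by
  unfold bil; rw [Finset.mul_sum]
  apply Finset.sum_congr rfl; intro i _
  simp only [PiLp.smul_apply, smul_eq_mul]; ring

lemma bil_zero_right (d : ℕ) (x : EuclideanSpace ℝ (Fin (d + 2))) : bil d x 0 = 0 := by
  unfold bil; apply Finset.sum_eq_zero; intro i _
  simp

lemma bil_add_left (d : ℕ) (x y z : EuclideanSpace ℝ (Fin (d + 2))) :
    bil d (x + y) z = bil d x z + bil d y z := by
  rw [bil_comm, bil_add_right, bil_comm d z x, bil_comm d z y]

lemma bil_sub_left (d : ℕ) (x y z : EuclideanSpace ℝ (Fin (d + 2))) :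
    bil d (x - y) z = bil d x z - bil d y z := by
  rw [bil_comm, bil_sub_right, bil_comm d z x, bil_comm d z y]

lemma bil_smul_left (d : ℕ) (c : ℝ) (x y : EuclideanSpace ℝ (Fin (d + 2))) :
    bil d (c • x) y = c * bil d x y := by
  rw [bil_comm, bil_smul_right, bil_comm d y x]

set_option maxHeartbeats 2000000 in
/-- if three nonzero isotropic vectors are pairwise space related
(⟨·,·⟩ < 0), then they are linearly independent and q restricted to their span
has signature (2,1). -/
theorem acausal_triple_signature (d : ℕ) (hd : 2 ≤ d)
    (x y z : EuclideanSpace ℝ (Fin (d + 2)))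
    (hx0 : x ≠ 0) (hy0 : y ≠ 0) (hz0 : z ≠ 0)
    (hx : quad d x = 0) (hy : quad d y = 0) (hz : quad d z = 0)
    (hxy : bil d x y < 0) (hyz : bil d y z < 0) (hxz : bil d x z < 0) :
    LinearIndependent ℝ ![x, y, z] ∧
      ∃ u₁ u₂ u₃ : EuclideanSpace ℝ (Fin (d + 2)),
        Submodule.span ℝ {u₁, u₂, u₃} = Submodule.span ℝ {x, y, z} ∧
        bil d u₁ u₂ = 0 ∧ bil d u₁ u₃ = 0 ∧ bil d u₂ u₃ = 0 ∧
        quad d u₁ = 1 ∧ quad d u₂ = 1 ∧ quad d u₃ = -1 := by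
  have hxx : bil d x x = 0 := hx
  have hyy : bil d y y = 0 := hy
  have hzz : bil d z z = 0 := hz
  have hyx : bil d y x = bil d x y := (bil_comm d x y).symm
  have hzy : bil d z y = bil d y z := (bil_comm d y z).symm
  have hzx : bil d z x = bil d x z := (bil_comm d x z).symm
  set a := bil d x y with ha
  set b := bil d y z with hb
  set c := bil d x z with hc
  have ha0 : a ≠ 0 := ne_of_lt hxy
  have hb0 : b ≠ 0 := ne_of_lt hyz
  have hc0 : c ≠ 0 := ne_of_lt hxz
  -- linear independence
  have hli : LinearIndependent ℝ ![x, y, z] := by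
    rw [Fintype.linearIndependent_iff]
    intro g hg
    have h0 : g 0 • x + g 1 • y + g 2 • z = 0 := by
      have := hg
      simpa [Fin.sum_univ_three, add_assoc] using this
    have e1 : g 1 * a + g 2 * c = 0 := by
      have h := congrArg (bil d x) h0
      simp only [bil_add_right, bil_smul_right, bil_zero_right, hxx, ← ha, ← hc] at h
      linarith
    have e2 : g 0 * a + g 2 * b = 0 := by
      have h := congrArg (bil d y) h0
      simp only [bil_add_right, bil_smul_right, bil_zero_right, hyy, hyx, ← ha, ← hb] at h
      linarith
    have e3 : g 0 * c + g 1 * b = 0 := by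
      have h := congrArg (bil d z) h0
      simp only [bil_add_right, bil_smul_right, bil_zero_right, hzz, hzx, hzy, ← hb, ← hc] at h
      linarith
    have h2 : 2 * (b * c) * g 2 = 0 := by linear_combination b * e1 + c * e2 - a * e3
    have hg2 : g 2 = 0 := by
      rcases mul_eq_zero.mp h2 with h | h
      · exfalso; have : b * c ≠ 0 := mul_ne_zero hb0 hc0; simp at h; tauto
      · exact h
    have hg1 : g 1 = 0 := by
      have : g 1 * a = 0 := by rw [hg2] at e1; linarith
      rcases mul_eq_zero.mp this with h | h
      · exact h
      · exact absurd h ha0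
    have hg0 : g 0 = 0 := by
      have : g 0 * a = 0 := by rw [hg2] at e2; linarith
      rcases mul_eq_zero.mp this with h | h
      · exact h
      · exact absurd h ha0
    intro i; fin_cases i <;> assumption
  refine ⟨hli, ?_⟩
  -- construct the orthogonal basis
  set e := x + y with he
  set f := x - y with hf
  set s : ℝ := (b + c) / (2 * a) with hs
  set t : ℝ := (b - c) / (2 * a) with ht
  set w := z - s • e - t • f with hw
  have hee : bil d e e = 2 * a := by
    simp only [he, bil_add_left, bil_add_right, hxx, hyy, hyx, ← ha]; ring
  have hff : bil d f f = -(2 * a) := by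
    simp only [hf, bil_sub_left, bil_sub_right, hxx, hyy, hyx, ← ha]; ring
  have hef : bil d e f = 0 := by
    simp only [he, hf, bil_add_left, bil_sub_right, hxx, hyy, hyx, ← ha]; ring
  have hfe : bil d f e = 0 := by rw [bil_comm, hef]
  have hze : bil d z e = b + c := by
    simp only [he, bil_add_right, hzx, hzy, ← hb, ← hc]; ring
  have hzf : bil d z f = c - b := by
    simp only [hf, bil_sub_right, hzx, hzy, ← hb, ← hc]
  have hwe : bil d w e = 0 := by
    simp only [hw, bil_sub_left, bil_smul_left, hze, hee, hef, hfe, hs, ht]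
    field_simp; ring
  have hwf : bil d w f = 0 := by
    simp only [hw, bil_sub_left, bil_smul_left, hzf, hff, hef, hfe, hs, ht]
    field_simp; ring
  have hew : bil d e w = 0 := by rw [bil_comm, hwe]
  have hfw : bil d f w = 0 := by rw [bil_comm, hwf]
  have hwz : bil d w z = -(2 * b * c) / a := by
    simp only [hw, bil_sub_left, bil_smul_left, hzz, hs, ht]
    rw [bil_comm d e z, hze, bil_comm d f z, hzf]
    field_simp; ring
  have hww : bil d w w = -(2 * b * c) / a := by
    have : bil d w w = bil d w z - s * bil d w e - t * bil d w f := by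
      conv_lhs => rw [hw]
      rw [bil_sub_right, bil_sub_right, bil_smul_right, bil_smul_right]
    rw [this, hwe, hwf, hwz]; ring
  have haneg : (0:ℝ) < -(2 * a) := by linarith
  have hQw : (0:ℝ) < -(2 * b * c) / a := by
    rw [div_pos_iff]
    right
    constructor
    · nlinarith
    · linarith
  set r := Real.sqrt (-(2 * a)) with hrdef
  set p := Real.sqrt (-(2 * b * c) / a) with hpdef
  have hr : 0 < r := Real.sqrt_pos.mpr haneg
  have hp : 0 < p := Real.sqrt_pos.mpr hQw
  have hr2 : r ^ 2 = -(2 * a) := Real.sq_sqrt haneg.le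
  have hp2 : p ^ 2 = -(2 * b * c) / a := Real.sq_sqrt hQw.le
  refine ⟨r⁻¹ • f, p⁻¹ • w, r⁻¹ • e, ?_, ?_, ?_, ?_, ?_, ?_, ?_⟩
  · -- span equality
    apply le_antisymm
    · rw [Submodule.span_le]
      have hxm : x ∈ Submodule.span ℝ {x, y, z} := Submodule.subset_span (by simp)
      have hym : y ∈ Submodule.span ℝ {x, y, z} := Submodule.subset_span (by simp)
      have hzm : z ∈ Submodule.span ℝ {x, y, z} := Submodule.subset_span (by simp)
      have hem : e ∈ Submodule.span ℝ {x, y, z} := by rw [he]; exact add_mem hxm hym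
      have hfm : f ∈ Submodule.span ℝ {x, y, z} := by rw [hf]; exact sub_mem hxm hym
      have hwm : w ∈ Submodule.span ℝ {x, y, z} := by
        rw [hw]
        exact sub_mem (sub_mem hzm (Submodule.smul_mem _ _ hem)) (Submodule.smul_mem _ _ hfm)
      intro v hv
      simp only [Set.mem_insert_iff, Set.mem_singleton_iff] at hv
      rcases hv with rfl | rfl | rfl
      · exact Submodule.smul_mem _ _ hfm
      · exact Submodule.smul_mem _ _ hwm
      · exact Submodule.smul_mem _ _ hem
    · rw [Submodule.span_le]
      set T := Submodule.span ℝ ({r⁻¹ • f, p⁻¹ • w, r⁻¹ • e} :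
        Set (EuclideanSpace ℝ (Fin (d + 2)))) with hT
      have hfm : f ∈ T := by
        have hfe : f = r • (r⁻¹ • f) := by
          rw [smul_smul, mul_inv_cancel₀ hr.ne', one_smul]
        rw [hfe]
        exact Submodule.smul_mem _ _ (Submodule.subset_span (by simp))
      have hem : e ∈ T := by
        have hee' : e = r • (r⁻¹ • e) := by
          rw [smul_smul, mul_inv_cancel₀ hr.ne', one_smul]
        rw [hee']
        exact Submodule.smul_mem _ _ (Submodule.subset_span (by simp))
      have hwm : w ∈ T := by
        have hwe' : w = p • (p⁻¹ • w) := by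
          rw [smul_smul, mul_inv_cancel₀ hp.ne', one_smul]
        rw [hwe']
        exact Submodule.smul_mem _ _ (Submodule.subset_span (by simp))
      have hxm : x ∈ T := by
        have : x = (2:ℝ)⁻¹ • (e + f) := by rw [he, hf]; module
        rw [this]
        exact Submodule.smul_mem _ _ (add_mem hem hfm)
      have hym : y ∈ T := by
        have : y = (2:ℝ)⁻¹ • (e - f) := by rw [he, hf]; module
        rw [this]
        exact Submodule.smul_mem _ _ (sub_mem hem hfm)
      have hzm : z ∈ T := by
        have : z = w + s • e + t • f := by rw [hw]; module
        rw [this]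
        exact add_mem (add_mem hwm (Submodule.smul_mem _ _ hem)) (Submodule.smul_mem _ _ hfm)
      intro v hv
      simp only [Set.mem_insert_iff, Set.mem_singleton_iff] at hv
      rcases hv with rfl | rfl | rfl
      · exact hxm
      · exact hym
      · exact hzm
  · rw [bil_smul_left, bil_smul_right, hfw]; ring
  · rw [bil_smul_left, bil_smul_right, hfe]; ring
  · rw [bil_smul_left, bil_smul_right, hwe]; ring
  · show bil d _ _ = 1
    rw [bil_smul_left, bil_smul_right, hff]
    have hrr : r * r = -(2 * a) := by nlinarith [hr2]
    rw [← hrr]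
    field_simp
  · show bil d _ _ = 1
    rw [bil_smul_left, bil_smul_right, hww]
    have hpp : p * p = -(2 * b * c) / a := by nlinarith [hp2]
    rw [← hpp]
    field_simp
  · show bil d _ _ = -1
    rw [bil_smul_left, bil_smul_right, hee]
    have hrr : r * r = -(2 * a) := by nlinarith [hr2]
    have h2a : 2 * a = -(r * r) := by linarith
    rw [h2a]
    field_simp
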